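/- Let n ≥ 2 and let S be a signed permutation matrix (each row and column has exactly one nonzero entry, equal to ±1). Suppose S satisfies: s_{i,j} = s_{i+1,j+1} for i,j < n; s_{i,n} = −s_{i+1,1} and s_{n,j} = −s_{1,j+1} for i,j < n; and s_{n,n} = s_{1,1}. Then A^{-1} S A has integer entries, where A is the n×n matrix with q on the diagonal, -p on the subdiagonal, and p in entry (1,n) (p, q positive reals with p ≠ q). -/

import Mathlib

/-- The matrix `A` with `q` on the diagonal, `-p` on the subdiagonal,
`p` in the top-right corner (entry `(1,n)`), and `0` elsewhere. -/
def tilingMatrix (p q : ℝ) (n : ℕ) : Matrix (Fin n) (Fin n) ℝ :=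
  Matrix.of fun i j =>
    if (i : ℕ) = (j : ℕ) then q
    else if (i : ℕ) = (j : ℕ) + 1 then -p
    else if (i : ℕ) = 0 ∧ (j : ℕ) = n - 1 then p
    else 0

/-- A signed permutation matrix: all entries in `{0, ±1}`, with exactly one
nonzero entry in each row and each column. -/
def IsSignedPerm {n : ℕ} (S : Matrix (Fin n) (Fin n) ℝ) : Prop :=
  (∀ i j, S i j = 0 ∨ S i j = 1 ∨ S i j = -1) ∧
    (∀ i, ∃! j, S i j ≠ 0) ∧ (∀ j, ∃! i, S i j ≠ 0)



def shiftP (n : ℕ) : Matrix (Fin n) (Fin n) ℝ :=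
  Matrix.of fun i j =>
    if (i : ℕ) = (j : ℕ) + 1 then 1
    else if (i : ℕ) = 0 ∧ (j : ℕ) = n - 1 then -1
    else 0

lemma shiftP_apply (n a b : ℕ) (ha : a < n) (hb : b < n) :
    shiftP n ⟨a, ha⟩ ⟨b, hb⟩ =
      if a = b + 1 then 1 else if a = 0 ∧ b = n - 1 then -1 else 0 := rfl

lemma comm_P (n : ℕ) (hn : 2 ≤ n) (S : Matrix (Fin n) (Fin n) ℝ)
    (h1 : ∀ i j : Fin n, ∀ hi : (i : ℕ) + 1 < n, ∀ hj : (j : ℕ) + 1 < n,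
      S i j = S ⟨(i : ℕ) + 1, hi⟩ ⟨(j : ℕ) + 1, hj⟩)
    (h2 : ∀ i : Fin n, ∀ hi : (i : ℕ) + 1 < n,
      S i ⟨n - 1, (Nat.sub_lt (Nat.lt_of_lt_of_le (Nat.succ_pos 1) hn) Nat.one_pos)⟩ = -S ⟨(i : ℕ) + 1, hi⟩ ⟨0, (Nat.lt_of_lt_of_le (Nat.succ_pos 1) hn)⟩)
    (h3 : ∀ j : Fin n, ∀ hj : (j : ℕ) + 1 < n,
      S ⟨n - 1, (Nat.sub_lt (Nat.lt_of_lt_of_le (Nat.succ_pos 1) hn) Nat.one_pos)⟩ j = -S ⟨0, (Nat.lt_of_lt_of_le (Nat.succ_pos 1) hn)⟩ ⟨(j : ℕ) + 1, hj⟩)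
    (h4 : S ⟨n - 1, (Nat.sub_lt (Nat.lt_of_lt_of_le (Nat.succ_pos 1) hn) Nat.one_pos)⟩ ⟨n - 1, (Nat.sub_lt (Nat.lt_of_lt_of_le (Nat.succ_pos 1) hn) Nat.one_pos)⟩ = S ⟨0, (Nat.lt_of_lt_of_le (Nat.succ_pos 1) hn)⟩ ⟨0, (Nat.lt_of_lt_of_le (Nat.succ_pos 1) hn)⟩) :
    S * shiftP n = shiftP n * S := by
  ext i j
  obtain ⟨iv, hilt⟩ := i
  obtain ⟨jv, hjlt⟩ := j
  rw [Matrix.mul_apply, Matrix.mul_apply]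
  have L : ∀ v : ℝ, (∀ hjn : jv + 1 < n, S ⟨iv, hilt⟩ ⟨jv + 1, hjn⟩ = v) →
      (jv = n - 1 → -S ⟨iv, hilt⟩ ⟨0, by omega⟩ = v) →
      (∑ k, S ⟨iv, hilt⟩ k * shiftP n k ⟨jv, hjlt⟩) = v := by
    intro v hv1 hv2
    by_cases hjn : jv + 1 < n
    · rw [Finset.sum_eq_single (⟨jv + 1, hjn⟩ : Fin n)]
      · rw [shiftP_apply, if_pos rfl, mul_one]; exact hv1 hjn
      · intro k _ hk
        obtain ⟨kv, hkv⟩ := k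
        have hk' : kv ≠ jv + 1 := fun h => hk (by subst h; rfl)
        rw [shiftP_apply, if_neg hk', if_neg (by omega), mul_zero]
      · simp
    · have hjeq : jv = n - 1 := by omega
      rw [Finset.sum_eq_single (⟨0, by omega⟩ : Fin n)]
      · rw [shiftP_apply, if_neg (by omega), if_pos ⟨rfl, hjeq⟩]
        rw [← hv2 hjeq]; ring
      · intro k _ hk
        obtain ⟨kv, hkv⟩ := k
        have hk' : kv ≠ 0 := fun h => hk (by subst h; rfl)
        rw [shiftP_apply, if_neg (by omega), if_neg (by omega), mul_zero]
      · simp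
  have R : ∀ v : ℝ, (∀ hin : 0 < iv, S ⟨iv - 1, by omega⟩ ⟨jv, hjlt⟩ = v) →
      (iv = 0 → -S ⟨n - 1, by omega⟩ ⟨jv, hjlt⟩ = v) →
      (∑ k, shiftP n ⟨iv, hilt⟩ k * S k ⟨jv, hjlt⟩) = v := by
    intro v hv1 hv2
    by_cases hin : 0 < iv
    · rw [Finset.sum_eq_single (⟨iv - 1, by omega⟩ : Fin n)]
      · rw [shiftP_apply, if_pos (by omega), one_mul]; exact hv1 hin
      · intro k _ hk
        obtain ⟨kv, hkv⟩ := k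
        have hk' : kv ≠ iv - 1 := fun h => hk (by subst h; rfl)
        rw [shiftP_apply, if_neg (by omega), if_neg (by omega), zero_mul]
      · simp
    · have hieq : iv = 0 := by omega
      rw [Finset.sum_eq_single (⟨n - 1, by omega⟩ : Fin n)]
      · rw [shiftP_apply, if_neg (by omega), if_pos ⟨hieq, rfl⟩]
        rw [← hv2 hieq]; ring
      · intro k _ hk
        obtain ⟨kv, hkv⟩ := k
        have hk' : kv ≠ n - 1 := fun h => hk (by subst h; rfl)
        rw [shiftP_apply, if_neg (by omega), if_neg (by omega), zero_mul]
      · simp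
  by_cases hin : 0 < iv
  · obtain ⟨iv', rfl⟩ : ∃ k, iv = k + 1 := ⟨iv - 1, by omega⟩
    by_cases hjn : jv + 1 < n
    · rw [L (S ⟨iv', by omega⟩ ⟨jv, hjlt⟩) ?_ ?_, R (S ⟨iv', by omega⟩ ⟨jv, hjlt⟩) ?_ ?_]
      · intro _; rfl
      · intro h; exfalso; omega
      · intro hjn'
        exact (h1 ⟨iv', by omega⟩ ⟨jv, hjlt⟩ (show iv' + 1 < n by omega) hjn').symm
      · intro h; exfalso; omega
    · have hjeq : jv = n - 1 := by omega
      subst hjeq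
      rw [L (-S ⟨iv' + 1, hilt⟩ ⟨0, by omega⟩) ?_ ?_,
          R (-S ⟨iv' + 1, hilt⟩ ⟨0, by omega⟩) ?_ ?_]
      · intro _
        exact h2 ⟨iv', by omega⟩ (show iv' + 1 < n by omega)
      · intro h; exfalso; omega
      · intro hjn'; exfalso; omega
      · intro _; rfl
  · have hieq : iv = 0 := by omega
    subst hieq
    by_cases hjn : jv + 1 < n
    · rw [L (-S ⟨n - 1, by omega⟩ ⟨jv, hjlt⟩) ?_ ?_,
          R (-S ⟨n - 1, by omega⟩ ⟨jv, hjlt⟩) ?_ ?_]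
      · intro h; exfalso; omega
      · intro _; rfl
      · intro hjn'
        have := h3 ⟨jv, hjlt⟩ hjn'
        linarith [this]
      · intro h; exfalso; omega
    · have hjeq : jv = n - 1 := by omega
      subst hjeq
      rw [L (-S ⟨0, hilt⟩ ⟨0, by omega⟩) ?_ ?_, R (-S ⟨0, hilt⟩ ⟨0, by omega⟩) ?_ ?_]
      · intro h; exfalso; omega
      · intro _; exact congrArg Neg.neg h4
      · intro hjn'; exfalso; omega
      · intro _; rfl

lemma tiling_eq (p q : ℝ) (n : ℕ) (hn : 2 ≤ n) :
    tilingMatrix p q n = q • (1 : Matrix (Fin n) (Fin n) ℝ) - p • shiftP n := by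
  ext i j
  have hi := i.isLt; have hj := j.isLt
  have hij : ((i = j) ↔ ((i:ℕ) = (j:ℕ))) := ⟨fun h => by rw [h], Fin.ext⟩
  simp only [tilingMatrix, shiftP, Matrix.of_apply, Matrix.sub_apply, Matrix.smul_apply,
    Matrix.one_apply, smul_eq_mul, hij]
  split_ifs <;> first | (exfalso; omega) | ring

theorem cyclic_signed_perm_stabilizes (p q : ℝ) (hp : 0 < p) (hq : 0 < q) (hpq : p ≠ q)
    (n : ℕ) (hn : 2 ≤ n) (S : Matrix (Fin n) (Fin n) ℝ) (hS : IsSignedPerm S)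
    (h1 : ∀ i j : Fin n, ∀ hi : (i : ℕ) + 1 < n, ∀ hj : (j : ℕ) + 1 < n,
      S i j = S ⟨(i : ℕ) + 1, hi⟩ ⟨(j : ℕ) + 1, hj⟩)
    (h2 : ∀ i : Fin n, ∀ hi : (i : ℕ) + 1 < n,
      S i ⟨n - 1, by omega⟩ = -S ⟨(i : ℕ) + 1, hi⟩ ⟨0, by omega⟩)
    (h3 : ∀ j : Fin n, ∀ hj : (j : ℕ) + 1 < n,
      S ⟨n - 1, by omega⟩ j = -S ⟨0, by omega⟩ ⟨(j : ℕ) + 1, hj⟩)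
    (h4 : S ⟨n - 1, by omega⟩ ⟨n - 1, by omega⟩ = S ⟨0, by omega⟩ ⟨0, by omega⟩) :
    ∀ i j, ∃ m : ℤ, ((tilingMatrix p q n)⁻¹ * S * tilingMatrix p q n) i j = (m : ℝ) := by
  intro i j
  set A := tilingMatrix p q n with hA
  by_cases hAu : IsUnit A.det
  · have hcomm : S * A = A * S := by
      rw [hA, tiling_eq p q n hn, Matrix.mul_sub, Matrix.sub_mul, Matrix.mul_smul,
        Matrix.smul_mul, Matrix.mul_smul, Matrix.smul_mul, mul_one, one_mul,
        comm_P n hn S h1 h2 h3 h4]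
    have key : A⁻¹ * S * A = S := by
      rw [Matrix.mul_assoc, hcomm, ← Matrix.mul_assoc, Matrix.nonsing_inv_mul A hAu, one_mul]
    rw [key]
    rcases hS.1 i j with h | h | h
    · exact ⟨0, by simp [h]⟩
    · exact ⟨1, by simp [h]⟩
    · exact ⟨-1, by simp [h]⟩
  · have h0 : A⁻¹ = 0 := Matrix.nonsing_inv_apply_not_isUnit A hAu
    refine ⟨0, ?_⟩
    rw [h0]
    simp
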